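/- For every real number s > 1, ζ(s) = lim_{q→∞} (π/(2q+1))^s · Σ_{p=1}^{q} cot^s(pπ/(2q+1)). -/

import Mathlib

open Real Filter Finset

lemma aux_cot_pos {x : ℝ} (h1 : 0 < x) (h2 : x < π / 2) : 0 < Real.cot x := by
  rw [Real.cot_eq_cos_div_sin]
  exact div_pos (Real.cos_pos_of_mem_Ioo ⟨by linarith [Real.pi_pos], h2⟩)
    (Real.sin_pos_of_pos_of_lt_pi h1 (by linarith [Real.pi_pos]))

lemma aux_cot_le {x : ℝ} (h1 : 0 < x) (h2 : x < π / 2) : Real.cot x ≤ 1 / x := by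
  have htan : x < Real.tan x := Real.lt_tan h1 h2
  have : Real.cot x = (Real.tan x)⁻¹ := by
    rw [Real.cot_eq_cos_div_sin, Real.tan_eq_sin_div_cos, inv_div]
  rw [this, one_div]
  exact inv_anti₀ h1 htan.le

lemma aux_xcot : Tendsto (fun x : ℝ => x * Real.cot x) (nhdsWithin 0 (Set.Ioi 0)) (nhds 1) := by
  have h1 : Tendsto (fun x : ℝ => Real.sin x / x) (nhdsWithin 0 {0}ᶜ) (nhds 1) := by
    have := hasDerivAt_iff_tendsto_slope.mp (Real.hasDerivAt_sin 0)
    simpa [slope_fun_def, Real.cos_zero, div_eq_inv_mul] using this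
  have h2 : Tendsto (fun x : ℝ => x / Real.sin x) (nhdsWithin 0 {0}ᶜ) (nhds 1) := by
    have := h1.inv₀ one_ne_zero
    simpa [inv_div] using this
  have h3 : Tendsto (fun x : ℝ => Real.cos x * (x / Real.sin x)) (nhdsWithin 0 {0}ᶜ)
      (nhds 1) := by
    have hc : Tendsto (fun x : ℝ => Real.cos x) (nhdsWithin 0 {0}ᶜ) (nhds 1) := by
      have := (Real.continuous_cos.tendsto 0).mono_left (nhdsWithin_le_nhds (s := {0}ᶜ))
      simpa using this
    simpa using hc.mul h2
  have h4 : Tendsto (fun x : ℝ => x * Real.cot x) (nhdsWithin 0 {0}ᶜ) (nhds 1) := by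
    refine h3.congr fun x => ?_
    rw [Real.cot_eq_cos_div_sin]
    ring
  exact h4.mono_left (nhdsWithin_mono 0 fun x hx => ne_of_gt hx)

theorem zeta_cot_limit_2q1 (s : ℝ) (hs : 1 < s) :
    Tendsto (fun q : ℕ =>
        (π / (2 * q + 1)) ^ s * ∑ p ∈ Finset.Icc 1 q, (Real.cot (p * π / (2 * q + 1))) ^ s)
      atTop (nhds (∑' n : ℕ, 1 / ((n : ℝ) + 1) ^ s)) := by
  have hss : 0 < s := by linarith
  have hpi := Real.pi_pos
  set F : ℕ → ℕ → ℝ := fun q n =>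
    if n < q then (π / (2 * q + 1)) ^ s * (Real.cot ((n + 1) * π / (2 * q + 1))) ^ s else 0
    with hF
  -- denominator positivity
  have hden : ∀ q : ℕ, (0:ℝ) < 2 * q + 1 := fun q => by positivity
  -- angle bounds
  have hθpos : ∀ q n : ℕ, (0:ℝ) < ((n:ℝ) + 1) * π / (2 * q + 1) := fun q n => by positivity
  have hθlt : ∀ q n : ℕ, n < q → ((n:ℝ) + 1) * π / (2 * q + 1) < π / 2 := by
    intro q n h
    rw [div_lt_div_iff₀ (hden q) two_pos]
    have : (n:ℝ) + 1 ≤ q := by exact_mod_cast h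
    nlinarith
  -- rewrite LHS as tsum of F
  have hrw : ∀ q : ℕ,
      (π / (2 * q + 1)) ^ s * ∑ p ∈ Finset.Icc 1 q, (Real.cot (p * π / (2 * q + 1))) ^ s
        = ∑' n : ℕ, F q n := by
    intro q
    rw [tsum_eq_sum (s := Finset.range q) (f := F q)
        (fun b hb => by simp [hF, Finset.mem_range.not.mp hb])]
    have : ∑ p ∈ Finset.Icc 1 q, (Real.cot (p * π / (2 * q + 1))) ^ s
        = ∑ n ∈ Finset.range q, (Real.cot ((n + 1 : ℝ) * π / (2 * q + 1))) ^ s := by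
      rw [← Finset.Ico_add_one_right_eq_Icc, Finset.sum_Ico_eq_sum_range]
      simp only [Nat.add_sub_cancel]
      refine Finset.sum_congr rfl fun n _ => ?_
      push_cast
      ring_nf
    rw [this, Finset.mul_sum]
    refine Finset.sum_congr rfl fun n hn => ?_
    simp [hF, Finset.mem_range.mp hn]
  -- bound
  have hbound : ∀ q n : ℕ, ‖F q n‖ ≤ 1 / ((n:ℝ) + 1) ^ s := by
    intro q n
    by_cases h : n < q
    · have θpos := hθpos q n
      have θlt := hθlt q n h
      have hcotpos := aux_cot_pos θpos θlt
      have hFval : F q n = (π / (2 * q + 1)) ^ s *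
          (Real.cot ((n + 1 : ℝ) * π / (2 * q + 1))) ^ s := by simp [hF, h]
      have hnn : 0 ≤ F q n := by
        rw [hFval]
        positivity
      rw [Real.norm_eq_abs, abs_of_nonneg hnn, hFval]
      have h1 : (Real.cot ((n + 1 : ℝ) * π / (2 * q + 1))) ^ s
          ≤ (1 / (((n:ℝ) + 1) * π / (2 * q + 1))) ^ s :=
        Real.rpow_le_rpow hcotpos.le (aux_cot_le θpos θlt) hss.le
      calc (π / (2 * q + 1)) ^ s * (Real.cot ((n + 1 : ℝ) * π / (2 * q + 1))) ^ s
          ≤ (π / (2 * q + 1)) ^ s * (1 / (((n:ℝ) + 1) * π / (2 * q + 1))) ^ s := by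
            refine mul_le_mul_of_nonneg_left h1 ?_
            positivity
        _ = 1 / ((n:ℝ) + 1) ^ s := by
            rw [← Real.mul_rpow (by positivity) (by positivity)]
            have harg : π / (2 * (q:ℝ) + 1) * (1 / (((n:ℝ) + 1) * π / (2 * q + 1)))
                = (((n:ℝ) + 1))⁻¹ := by
              field_simp
            rw [harg, Real.inv_rpow (by positivity), one_div]
    · simp [hF, h]
      positivity
  -- pointwise limit
  have hlim : ∀ n : ℕ, Tendsto (fun q => F q n) atTop (nhds (1 / ((n:ℝ) + 1) ^ s)) := by
    intro n
    have hθ : Tendsto (fun q : ℕ => ((n:ℝ) + 1) * π / (2 * q + 1)) atTop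
        (nhdsWithin 0 (Set.Ioi 0)) := by
      apply tendsto_nhdsWithin_of_tendsto_nhds_of_eventually_within
      · have h2q : Tendsto (fun q : ℕ => (2 * (q:ℝ) + 1)) atTop atTop :=
          tendsto_atTop_add_const_right _ 1
            (tendsto_natCast_atTop_atTop.const_mul_atTop two_pos)
        have := h2q.inv_tendsto_atTop
        have h0 := this.const_mul (((n:ℝ) + 1) * π)
        simpa [div_eq_mul_inv, mul_zero] using h0
      · exact Eventually.of_forall fun q => hθpos q n
    have hxc : Tendsto (fun q : ℕ => (((n:ℝ) + 1) * π / (2 * q + 1)) *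
        Real.cot (((n:ℝ) + 1) * π / (2 * q + 1))) atTop (nhds 1) := aux_xcot.comp hθ
    have hrp : Tendsto (fun q : ℕ => ((((n:ℝ) + 1) * π / (2 * q + 1)) *
        Real.cot (((n:ℝ) + 1) * π / (2 * q + 1))) ^ s) atTop (nhds 1) := by
      have hc : ContinuousAt (fun x : ℝ => x ^ s) 1 :=
        Real.continuousAt_rpow_const 1 s (Or.inl one_ne_zero)
      have := hc.tendsto.comp hxc
      simpa [Real.one_rpow, Function.comp_def] using this
    have hdiv := hrp.div_const (((n:ℝ) + 1) ^ s)
    rw [show (1:ℝ) / ((n:ℝ) + 1) ^ s = 1 / ((n:ℝ) + 1) ^ s from rfl]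
    refine Tendsto.congr' ?_ hdiv
    filter_upwards [eventually_ge_atTop (n + 1)] with q hq
    have h : n < q := hq
    have θpos := hθpos q n
    have θlt := hθlt q n h
    have hcotpos := aux_cot_pos θpos θlt
    symm
    simp only [hF, if_pos h]
    rw [Real.mul_rpow θpos.le hcotpos.le,
      show π / (2 * (q:ℝ) + 1) = ((((n:ℝ) + 1) * π / (2 * q + 1))) / (((n:ℝ) + 1)) from by
        field_simp,
      Real.div_rpow θpos.le (by positivity)]
    ring
  have hsummable : Summable (fun n : ℕ => 1 / ((n:ℝ) + 1) ^ s) := by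
    have := Real.summable_one_div_nat_rpow.mpr hs
    have h2 := (summable_nat_add_iff 1).mpr this
    refine h2.congr fun n => ?_
    push_cast
    ring_nf
  have := tendsto_tsum_of_dominated_convergence hsummable hlim
    (Eventually.of_forall fun q => hbound q)
  exact this.congr fun q => (hrw q).symm
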